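/- The formal power series y = f₀ ∈ ℚ⟦z⟧ that is the generating function of Motzkin paths with two variants of level steps on odd levels satisfies the algebraic equation (z³ − z²)·y² + (1 − 3z + 2z²)·y + (2z − 1) = 0. -/

import Mathlib

/-- A step of a colored Motzkin path: up, down, or a level step with a color. -/
inductive Step | U | D | L (c : Bool)
deriving DecidableEq, Fintype

/-- Validity of a path starting at height `h`: never below the x-axis, and the
second color of level step (`c = true`) is only allowed at odd heights. -/
def okOdd : ℕ → List Step → Bool
  | _, [] => true
  | h, Step.U :: r => okOdd (h+1) r
  | h, Step.D :: r => decide (h ≠ 0) && okOdd (h-1) r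
  | h, Step.L c :: r => (!c || decide (h % 2 = 1)) && okOdd h r

/-- Final height of a path starting at height `h`. -/
def endH : ℕ → List Step → ℕ
  | h, [] => h
  | h, Step.U :: r => endH (h+1) r
  | h, Step.D :: r => endH (h-1) r
  | h, Step.L _ :: r => endH h r

/-- `cnt i n` = number of valid colored paths of length `n` (two colors of level
steps at odd heights, one at even heights) from height `0` to height `i`. -/
def cnt (i n : ℕ) : ℕ :=
  (Finset.univ.filter fun f : Fin n → Step =>
    okOdd 0 (List.ofFn f) = true ∧ endH 0 (List.ofFn f) = i).card

/-- parity-relative validity: `b` is the parity of the floor. -/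
def okP (b : Bool) : ℕ → List Step → Bool
  | _, [] => true
  | h, Step.U :: r => okP b (h+1) r
  | h, Step.D :: r => decide (h ≠ 0) && okP b (h-1) r
  | h, Step.L c :: r => (!c || (xor (decide (h % 2 = 1)) b)) && okP b h r

lemma okOdd_eq_okP (l : List Step) : ∀ h, okOdd h l = okP false h l := by
  induction l with
  | nil => intro h; rfl
  | cons s r ih => intro h; cases s <;> simp [okOdd, okP, ih]

lemma endH_append (l1 l2 : List Step) : ∀ h, endH h (l1 ++ l2) = endH (endH h l1) l2 := by
  induction l1 with
  | nil => intro h; rfl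
  | cons s r ih => intro h; cases s <;> simp [endH, ih]

lemma okP_append (b : Bool) (l1 l2 : List Step) :
    ∀ h, okP b h (l1 ++ l2) = (okP b h l1 && okP b (endH h l1) l2) := by
  induction l1 with
  | nil => intro h; simp [okP, endH]
  | cons s r ih => intro h; cases s <;> simp [okP, endH, ih, Bool.and_assoc]

/-- going up one level, flipping floor parity -/
lemma okP_up (b : Bool) (l : List Step) :
    ∀ h, okP b h l = true → okP (!b) (h+1) l = true := by
  induction l with
  | nil => intro h _; rfl
  | cons s r ih =>
    intro h hl
    cases s with
    | U => exact ih (h+1) hl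
    | D =>
      simp only [okP, Bool.and_eq_true, decide_eq_true_eq] at hl ⊢
      obtain ⟨h0, hr⟩ := hl
      refine ⟨by omega, ?_⟩
      have := ih (h-1) hr
      have e : h - 1 + 1 = h + 1 - 1 := by omega
      rwa [e] at this
    | L c =>
      simp only [okP, Bool.and_eq_true, Bool.or_eq_true] at hl ⊢
      obtain ⟨hc, hr⟩ := hl
      refine ⟨?_, ih h hr⟩
      rcases hc with hc | hc
      · exact Or.inl hc
      · right
        have : (decide ((h+1) % 2 = 1)) = ! (decide (h % 2 = 1)) := by
          rcases Nat.even_or_odd h with he | ho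
          · have h1 : h % 2 = 0 := Nat.even_iff.mp he
            have h2 : (h+1) % 2 = 1 := by omega
            simp [h1, h2]
          · have h1 : h % 2 = 1 := Nat.odd_iff.mp ho
            have h2 : (h+1) % 2 = 0 := by omega
            simp [h1, h2]
        rw [this]
        cases b <;> cases hb : decide (h % 2 = 1) <;> simp_all
      
lemma endH_up (b : Bool) (l : List Step) :
    ∀ h, okP b h l = true → endH (h+1) l = endH h l + 1 := by
  induction l with
  | nil => intro h _; rfl
  | cons s r ih =>
    intro h hl
    cases s with
    | U => exact ih (h+1) hl
    | D =>
      simp only [okP, Bool.and_eq_true, decide_eq_true_eq] at hl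
      obtain ⟨h0, hr⟩ := hl
      have e : h + 1 - 1 = (h - 1) + 1 := by omega
      simp only [endH, e]
      exact ih (h-1) hr
    | L c =>
      simp only [okP, Bool.and_eq_true] at hl
      exact ih h hl.2

/-- split a path (from height `h ≥ 1`, ending at 0) at its first arrival at 0 -/
def sp : ℕ → List Step → List Step × List Step
  | _, [] => ([], [])
  | h, Step.U :: r => let q := sp (h+1) r; (Step.U :: q.1, q.2)
  | h, Step.D :: r => if h = 1 then ([], r) else let q := sp (h-1) r; (Step.D :: q.1, q.2)
  | h, Step.L c :: r => let q := sp h r; (Step.L c :: q.1, q.2)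

lemma sp_spec (b : Bool) (l : List Step) :
    ∀ h, 1 ≤ h → okP b h l = true → endH h l = 0 →
      l = (sp h l).1 ++ Step.D :: (sp h l).2 ∧
      okP (!b) (h-1) (sp h l).1 = true ∧ endH (h-1) (sp h l).1 = 0 ∧
      okP b 0 (sp h l).2 = true ∧ endH 0 (sp h l).2 = 0 := by
  induction l with
  | nil => intro h h1 _ he; simp [endH] at he; omega
  | cons s r ih =>
    intro h h1 hok he
    cases s with
    | U =>
      obtain ⟨e1, e2, e3, e4, e5⟩ := ih (h+1) (by omega) hok he
      refine ⟨?_, ?_, ?_, e4, e5⟩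
      · simpa [sp] using congrArg (Step.U :: ·) e1
      · have eh : h + 1 - 1 = (h - 1) + 1 := by omega
        rw [eh] at e2
        simpa [sp, okP] using e2
      · have eh : h + 1 - 1 = (h - 1) + 1 := by omega
        rw [eh] at e3
        simpa [sp, endH] using e3
    | D =>
      simp only [okP, Bool.and_eq_true, decide_eq_true_eq] at hok
      obtain ⟨h0, hr⟩ := hok
      simp only [endH] at he
      by_cases h1' : h = 1
      · subst h1'
        simp [sp, okP, endH]
        exact ⟨hr, he⟩
      · have h2 : 2 ≤ h := by omega
        obtain ⟨e1, e2, e3, e4, e5⟩ := ih (h-1) (by omega) hr he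
        rw [show sp h (Step.D::r) = (Step.D :: (sp (h-1) r).1, (sp (h-1) r).2) from by
          simp [sp, h1']]
        refine ⟨?_, ?_, ?_, e4, e5⟩
        · simpa using congrArg (Step.D :: ·) e1
        · simp only [okP, Bool.and_eq_true, decide_eq_true_eq]
          exact ⟨by omega, e2⟩
        · simp only [endH]
          exact e3
    | L c =>
      simp only [okP, Bool.and_eq_true] at hok
      obtain ⟨hc, hr⟩ := hok
      simp only [endH] at he
      obtain ⟨e1, e2, e3, e4, e5⟩ := ih h h1 hr he
      refine ⟨?_, ?_, ?_, e4, e5⟩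
      · simpa [sp] using congrArg (Step.L c :: ·) e1
      · simp only [sp, okP, Bool.and_eq_true]
        refine ⟨?_, e2⟩
        rcases Bool.or_eq_true _ _ |>.mp hc with h' | h'
        · simp [h']
        · have hpar : (decide ((h-1) % 2 = 1)) = ! (decide (h % 2 = 1)) := by
            rcases Nat.even_or_odd h with hev | hod
            · have p1 : h % 2 = 0 := Nat.even_iff.mp hev
              have p2 : (h-1) % 2 = 1 := by omega
              simp [p1, p2]
            · have p1 : h % 2 = 1 := Nat.odd_iff.mp hod
              have p2 : (h-1) % 2 = 0 := by omega
              simp [p1, p2]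
          rw [Bool.or_eq_true]
          right
          rw [hpar]
          revert h'
          cases decide (h % 2 = 1) <;> cases b <;> simp
      · simpa [sp, endH] using e3

lemma sp_of_append (b : Bool) (p : List Step) :
    ∀ h s, okP b h p = true → endH h p = 0 → sp (h+1) (p ++ Step.D :: s) = (p, s) := by
  induction p with
  | nil =>
    intro h s _ he
    simp [endH] at he; subst he
    simp [sp]
  | cons st r ih =>
    intro h s hok he
    cases st with
    | U =>
      simp only [endH] at he
      simp [sp, ih (h+1) s hok he]
    | D =>
      simp only [okP, Bool.and_eq_true, decide_eq_true_eq] at hok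
      obtain ⟨h0, hr⟩ := hok
      simp only [endH] at he
      have h1 : ¬ (h + 1 = 1) := by omega
      have e : h + 1 - 1 = (h - 1) + 1 := by omega
      simp [sp, h1, e, h0, ih (h-1) s hr he]
    | L c =>
      simp only [okP, Bool.and_eq_true] at hok
      simp only [endH] at he
      simp [sp, ih h s hok.2 he]

def allL (n : ℕ) : Finset (List Step) :=
  (Finset.univ : Finset (Fin n → Step)).image List.ofFn

lemma mem_allL {n : ℕ} {l : List Step} : l ∈ allL n ↔ l.length = n := by
  constructor
  · rintro h
    simp only [allL, Finset.mem_image] at h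
    obtain ⟨f, _, rfl⟩ := h
    simp
  · rintro rfl
    simp only [allL, Finset.mem_image]
    exact ⟨fun i => l[i], Finset.mem_univ _, List.ofFn_getElem⟩

def PQ (b : Bool) (n : ℕ) : Finset (List Step) :=
  (allL n).filter fun l => okP b 0 l = true ∧ endH 0 l = 0

lemma mem_PQ {b : Bool} {n : ℕ} {l : List Step} :
    l ∈ PQ b n ↔ l.length = n ∧ okP b 0 l = true ∧ endH 0 l = 0 := by
  simp [PQ, Finset.mem_filter, mem_allL, and_assoc]

def A (b : Bool) (n : ℕ) : ℕ := (PQ b n).card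

lemma A_zero (b : Bool) : A b 0 = 1 := by
  have : PQ b 0 = {[]} := by
    ext l
    simp [mem_PQ, List.length_eq_zero_iff]
    rintro rfl
    exact ⟨rfl, rfl⟩
  rw [A, this, Finset.card_singleton]

def colors (b : Bool) : Finset Bool := if b then {false, true} else {false}

def hcol : List Step → Bool
  | (Step.L c :: _) => c
  | _ => false

lemma card_headL (b : Bool) (n : ℕ) :
    ((PQ b (n+1)).filter fun l => ¬ (l.head? = some Step.U)).card = (cond b 2 1) * A b n := by
  have hb : ((colors b) ×ˢ PQ b n).card = (cond b 2 1) * A b n := by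
    rw [Finset.card_product]
    congr 1
    cases b <;> simp [colors]
  rw [← hb]
  symm
  apply Finset.card_nbij' (fun q => Step.L q.1 :: q.2) (fun l => (hcol l, l.tail))
  · rintro ⟨c, l⟩ hm
    simp only [Finset.mem_coe, Finset.mem_product, mem_PQ] at hm
    obtain ⟨hc, hl, hok, he⟩ := hm
    simp only [Finset.mem_coe, Finset.mem_filter, mem_PQ]
    refine ⟨⟨by simp [hl], ?_, he⟩, by simp⟩
    simp only [okP, Bool.and_eq_true, Bool.or_eq_true]
    refine ⟨?_, hok⟩
    cases b with
    | false =>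
      have hc' : c = false := by simpa [colors] using hc
      subst hc'; simp
    | true => simp
  · intro l hm
    simp only [Finset.mem_coe, Finset.mem_filter, mem_PQ] at hm
    obtain ⟨⟨hl, hok, he⟩, hhd⟩ := hm
    match l with
    | [] => simp at hl
    | Step.U :: r => simp at hhd
    | Step.D :: r => simp [okP] at hok
    | Step.L c :: r =>
      simp only [okP, Bool.and_eq_true, Bool.or_eq_true] at hok
      simp only [endH] at he
      simp only [List.length_cons] at hl
      simp only [Finset.mem_coe, Finset.mem_product, mem_PQ, hcol, List.tail_cons]
      refine ⟨?_, by omega, hok.2, he⟩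
      cases b with
      | true => simp [colors]
      | false =>
        rcases hok.1 with h' | h'
        · simp only [Bool.not_eq_true'] at h'
          simp [colors, h']
        · simp at h'
  · rintro ⟨c, l⟩ _
    simp [hcol]
  · intro l hm
    simp only [Finset.mem_coe, Finset.mem_filter, mem_PQ] at hm
    obtain ⟨⟨hl, hok, he⟩, hhd⟩ := hm
    match l with
    | [] => simp at hl
    | Step.U :: r => simp at hhd
    | Step.D :: r => simp [okP] at hok
    | Step.L c :: r => simp [hcol]

lemma card_headU (b : Bool) (n : ℕ) :
    ((PQ b (n+1)).filter fun l => l.head? = some Step.U).card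
      = ∑ k ∈ Finset.range n, A (!b) k * A b (n-1-k) := by
  have hc : ((Finset.range n).sigma fun k => PQ (!b) k ×ˢ PQ b (n-1-k)).card
      = ∑ k ∈ Finset.range n, A (!b) k * A b (n-1-k) := by
    rw [Finset.card_sigma]
    exact Finset.sum_congr rfl fun k _ => Finset.card_product _ _
  rw [← hc]
  symm
  apply Finset.card_nbij' (fun q => Step.U :: q.2.1 ++ Step.D :: q.2.2)
    (fun l => ⟨(sp 1 l.tail).1.length, sp 1 l.tail⟩)
  · rintro ⟨k, p, s⟩ hm
    simp only [Finset.mem_coe, Finset.mem_sigma, Finset.mem_product, mem_PQ, Finset.mem_range] at hm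
    obtain ⟨hk, ⟨hpl, hpok, hpe⟩, ⟨hsl, hsok, hse⟩⟩ := hm
    have hup : okP b 1 p = true := by
      have := okP_up (!b) p 0 hpok
      simpa using this
    have hend1 : endH 1 p = 1 := by
      have := endH_up (!b) p 0 hpok
      simpa [hpe] using this
    simp only [Finset.mem_coe, Finset.mem_filter, mem_PQ]
    refine ⟨⟨?_, ?_, ?_⟩, by simp⟩
    · simp [hpl, hsl]; omega
    · show okP b 1 (p ++ Step.D :: s) = true
      rw [okP_append, hup, hend1]
      simpa [okP] using hsok
    · show endH 1 (p ++ Step.D :: s) = 0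
      rw [endH_append, hend1]
      simpa [endH] using hse
  · intro l hm
    simp only [Finset.mem_coe, Finset.mem_filter, mem_PQ] at hm
    obtain ⟨⟨hl, hok, he⟩, hhd⟩ := hm
    match l with
    | [] => simp at hl
    | Step.D :: r => simp [okP] at hok
    | Step.L c :: r => simp at hhd
    | Step.U :: r =>
      simp only [List.length_cons] at hl
      have hok' : okP b 1 r = true := hok
      have he' : endH 1 r = 0 := he
      obtain ⟨e1, e2, e3, e4, e5⟩ := sp_spec b r 1 le_rfl hok' he'
      simp only [List.tail_cons]
      simp only [Finset.mem_coe, Finset.mem_sigma, Finset.mem_product, mem_PQ, Finset.mem_range]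
      have hlen : (sp 1 r).1.length + 1 + (sp 1 r).2.length = n := by
        have := congrArg List.length e1
        simp at this
        omega
      refine ⟨by omega, ⟨?_, by simpa using e2, by simpa using e3⟩,
        ⟨by omega, e4, e5⟩⟩
      trivial
  · rintro ⟨k, p, s⟩ hm
    simp only [Finset.mem_coe, Finset.mem_sigma, Finset.mem_product, mem_PQ, Finset.mem_range] at hm
    obtain ⟨hk, ⟨hpl, hpok, hpe⟩, _⟩ := hm
    have hsp : sp 1 (p ++ Step.D :: s) = (p, s) := by
      simpa using sp_of_append (!b) p 0 s hpok hpe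
    have ht : (Step.U :: p ++ Step.D :: s).tail = p ++ Step.D :: s := rfl
    beta_reduce
    rw [ht, hsp]
    subst hpl
    rfl
  · intro l hm
    simp only [Finset.mem_coe, Finset.mem_filter, mem_PQ] at hm
    obtain ⟨⟨hl, hok, he⟩, hhd⟩ := hm
    match l with
    | [] => simp at hl
    | Step.D :: r => simp [okP] at hok
    | Step.L c :: r => simp at hhd
    | Step.U :: r =>
      obtain ⟨e1, _, _, _, _⟩ := sp_spec b r 1 le_rfl hok he
      simp only [List.tail_cons]
      exact congrArg (Step.U :: ·) e1.symm

lemma A_rec (b : Bool) (n : ℕ) :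
    A b (n+1) = (cond b 2 1) * A b n + ∑ k ∈ Finset.range n, A (!b) k * A b (n-1-k) := by
  rw [← card_headL b n, ← card_headU b n, A]
  rw [← Finset.card_filter_add_card_filter_not
    (p := fun l => l.head? = some Step.U) (s := PQ b (n+1))]
  ring

open PowerSeries

noncomputable def F (b : Bool) : PowerSeries ℚ := PowerSeries.mk fun n => (A b n : ℚ)

lemma F_eq (b : Bool) :
    F b = 1 + PowerSeries.C (cond b 2 1) * (X * F b) + X ^ 2 * (F (!b) * F b) := by
  ext n
  simp only [map_add, coeff_C_mul]
  match n with
  | 0 =>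
    simp only [coeff_zero_eq_constantCoeff, map_mul, map_one, constantCoeff_X,
      constantCoeff_one, map_pow]
    simp [F, A_zero]
  | 1 =>
    have h2 : (coeff 1) (X ^ 2 * ((F !b) * F b)) = 0 := by
      rw [pow_two, mul_assoc, coeff_succ_X_mul, coeff_zero_eq_constantCoeff, map_mul,
        constantCoeff_X, zero_mul]
    rw [h2, coeff_succ_X_mul, coeff_one]
    simp only [F, coeff_mk, A_zero]
    have := A_rec b 0
    simp only [Finset.range_zero, Finset.sum_empty, add_zero, mul_one] at this
    rw [this, A_zero]
    cases b <;> simp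
  | (m+2) =>
    have h2 : (coeff (m+2)) (X ^ 2 * ((F !b) * F b)) = (coeff m) ((F !b) * F b) :=
      coeff_X_pow_mul _ 2 m
    rw [h2, coeff_succ_X_mul, coeff_mul, Finset.Nat.sum_antidiagonal_eq_sum_range_succ_mk,
      coeff_one]
    simp only [F, coeff_mk]
    rw [A_rec b (m+1)]
    simp only [Nat.add_sub_cancel]
    cases b <;> · simp only [cond]; push_cast; ring

lemma cnt_eq_A (n : ℕ) : cnt 0 n = A false n := by
  rw [A, PQ, allL, Finset.filter_image,
    Finset.card_image_of_injective _ List.ofFn_injective, cnt]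
  congr 1
  ext f
  simp [okOdd_eq_okP]


open PowerSeries in
/-- The generating function of Motzkin paths with two variants of level steps on
odd levels satisfies `(z³−z²)y² + (1−3z+2z²)y + (2z−1) = 0`. -/
theorem stmt1 :
    (X ^ 3 - X ^ 2) * (PowerSeries.mk fun n => (cnt 0 n : ℚ)) ^ 2 +
      (1 - 3 * X + 2 * X ^ 2) * (PowerSeries.mk fun n => (cnt 0 n : ℚ)) +
      (2 * X - 1) = 0 := by
  have hmk : (PowerSeries.mk fun n => (cnt 0 n : ℚ)) = F false := by
    ext n
    simp [F, cnt_eq_A]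
  rw [hmk]
  have h1 := F_eq false
  have h2 := F_eq true
  simp only [Bool.not_false, Bool.not_true, cond, map_one, map_ofNat, one_mul] at h1 h2
  linear_combination (1 - 2*X - X^2 * F false) * h1 + (X^2 * F false) * h2
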